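/- In a first-quadrant spectral sequence of bialgebras over a field, the shortest nonzero differential (in lowest total degree) maps an indecomposable element to a primitive element. -/

import Mathlib

open TensorProduct

/-- In a spectral sequence of connected graded bialgebras over a field, the
shortest nonzero differential (a biderivation `d`, nonzero in lowest total
degree `n`) sends some indecomposable element to a primitive element. -/
theorem stmt_12 (k : Type*) [Field k]
    (A : Type*) [Ring A] [Bialgebra k A]
    (𝒜 : ℕ → Submodule k A) [SetLike.GradedMonoid 𝒜] [DirectSum.Decomposition 𝒜]
    (hconn : 𝒜 0 = (1 : Submodule k A))
    (hcomul : ∀ n : ℕ, ∀ x ∈ 𝒜 n,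
      Coalgebra.comul (R := k) x ∈
        ⨆ (q : ℕ × ℕ) (_ : q.1 + q.2 = n),
          LinearMap.range (TensorProduct.map (𝒜 q.1).subtype (𝒜 q.2).subtype))
    (d : A →ₗ[k] A)
    (hder : ∀ (i : ℕ) (a b : A), a ∈ 𝒜 i →
      d (a * b) = d a * b + ((-1 : ℤ) ^ i) • (a * d b))
    (hcoder : ∀ x : A,
      Coalgebra.comul (R := k) (d x)
        = TensorProduct.map d LinearMap.id (Coalgebra.comul (R := k) x)
          + TensorProduct.map LinearMap.id d (Coalgebra.comul (R := k) x))
    (n : ℕ) (hmin : ∀ m : ℕ, m < n → ∀ x ∈ 𝒜 m, d x = 0)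
    (hne : ∃ x ∈ 𝒜 n, d x ≠ 0) :
    ∃ x ∈ 𝒜 n, d x ≠ 0
      ∧ x ∉ ((⨆ (m : ℕ) (_ : 0 < m), 𝒜 m) * (⨆ (m : ℕ) (_ : 0 < m), 𝒜 m) :
          Submodule k A)
      ∧ Coalgebra.comul (R := k) (d x) = d x ⊗ₜ[k] 1 + 1 ⊗ₜ[k] d x := by
  classical
  obtain ⟨x, hx, hdx⟩ := hne
  have h1 : (1 : A) ∈ 𝒜 0 := SetLike.one_mem_graded 𝒜
  have hd1 : d 1 = 0 := by
    have h2 : d ((1 : A) * 1) = d 1 * 1 + ((-1 : ℤ) ^ 0) • ((1 : A) * d 1) :=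
      hder 0 1 1 h1
    simp only [one_mul, mul_one, pow_zero, one_smul] at h2
    have h3 : d (1 : A) + 0 = d 1 + d 1 := by rw [add_zero]; exact h2
    exact (add_left_cancel h3).symm
  -- any element of 𝒜 0 is killed by d, and has counit recovering itself
  have hzero : ∀ b : A, b ∈ 𝒜 0 → d b = 0 ∧
      b = (algebraMap k A) (Coalgebra.counit (R := k) b) := by
    intro b hb
    rw [hconn] at hb
    obtain ⟨c, rfl⟩ := Submodule.mem_one.mp hb
    constructor
    · rw [Algebra.algebraMap_eq_smul_one, map_smul, hd1, smul_zero]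
    · rw [Bialgebra.counit_algebraMap]
  refine ⟨x, hx, hdx, ?_, ?_⟩
  · -- indecomposability: d kills the degree-n component of any decomposable
    intro hmem
    have key : ∀ y ∈ ((⨆ (m : ℕ) (_ : 0 < m), 𝒜 m) *
        (⨆ (m : ℕ) (_ : 0 < m), 𝒜 m) : Submodule k A),
        d ((DirectSum.decompose 𝒜 y n : A)) = 0 := by
      intro y hy
      refine Submodule.mul_induction_on hy ?_ ?_
      · intro a ha b hb
        revert b
        refine Submodule.iSup_induction (x := a)
          (fun m => ⨆ _ : 0 < m, 𝒜 m)
          (motive := fun a => ∀ b ∈ (⨆ (m : ℕ) (_ : 0 < m), 𝒜 m : Submodule k A),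
            d ((DirectSum.decompose 𝒜 (a * b) n : A)) = 0) ha ?_ ?_ ?_
        · intro m a ha
          rcases Nat.eq_zero_or_pos m with rfl | hm
          · rw [iSup_neg (lt_irrefl 0)] at ha
            rw [Submodule.mem_bot] at ha
            subst ha
            intro b _
            simp
          · rw [iSup_pos hm] at ha
            intro b hb
            refine Submodule.iSup_induction (x := b)
              (fun m' => ⨆ _ : 0 < m', 𝒜 m')
              (motive := fun b => d ((DirectSum.decompose 𝒜 (a * b) n : A)) = 0) hb ?_ ?_ ?_
            · intro m' b hb'
              rcases Nat.eq_zero_or_pos m' with rfl | hm'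
              · rw [iSup_neg (lt_irrefl 0)] at hb'
                rw [Submodule.mem_bot] at hb'
                subst hb'
                simp
              · rw [iSup_pos hm'] at hb'
                have hab : a * b ∈ 𝒜 (m + m') := SetLike.mul_mem_graded ha hb'
                by_cases hmn : m + m' = n
                · rw [DirectSum.decompose_of_mem_same 𝒜 (hmn ▸ hab)]
                  rw [hder m a b ha, hmin m (by omega) a ha,
                    hmin m' (by omega) b hb']
                  simp
                · rw [DirectSum.decompose_of_mem_ne 𝒜 hab hmn, map_zero]
            · simp
            · intro b₁ b₂ ih1 ih2
              rw [mul_add, DirectSum.decompose_add, DirectSum.add_apply,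
                Submodule.coe_add, map_add, ih1, ih2, add_zero]
        · intro b _
          simp
        · intro a₁ a₂ ih1 ih2 b hb
          rw [add_mul, DirectSum.decompose_add, DirectSum.add_apply,
            Submodule.coe_add, map_add, ih1 b hb, ih2 b hb, add_zero]
      · intro y₁ y₂ ih1 ih2
        rw [DirectSum.decompose_add, DirectSum.add_apply,
          Submodule.coe_add, map_add, ih1, ih2, add_zero]
    have := key x hmem
    rw [DirectSum.decompose_of_mem_same 𝒜 hx] at this
    exact hdx this
  · -- primitivity
    set ε : A →ₗ[k] k := Coalgebra.counit (R := k) with hε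
    have key : ∀ t ∈ (⨆ (q : ℕ × ℕ) (_ : q.1 + q.2 = n),
        LinearMap.range (TensorProduct.map (𝒜 q.1).subtype (𝒜 q.2).subtype) :
          Submodule k (A ⊗[k] A)),
        TensorProduct.map d LinearMap.id t + TensorProduct.map LinearMap.id d t
          = d ((TensorProduct.rid k A) (TensorProduct.map LinearMap.id ε t)) ⊗ₜ[k] (1 : A)
            + (1 : A) ⊗ₜ[k] d ((TensorProduct.lid k A) (TensorProduct.map ε LinearMap.id t)) := by
      intro t ht
      refine Submodule.iSup_induction (x := t)
        (fun q : ℕ × ℕ => ⨆ _ : q.1 + q.2 = n,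
          LinearMap.range (TensorProduct.map (𝒜 q.1).subtype (𝒜 q.2).subtype))
        (motive := fun t =>
          TensorProduct.map d LinearMap.id t + TensorProduct.map LinearMap.id d t
          = d ((TensorProduct.rid k A) (TensorProduct.map LinearMap.id ε t)) ⊗ₜ[k] (1 : A)
            + (1 : A) ⊗ₜ[k] d ((TensorProduct.lid k A) (TensorProduct.map ε LinearMap.id t)))
        ht ?_ ?_ ?_
      · rintro ⟨i, j⟩ t ht
        dsimp only at ht
        by_cases hq : i + j = n
        · rw [iSup_pos hq] at ht
          obtain ⟨s, rfl⟩ := ht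
          induction s using TensorProduct.induction_on with
          | zero => simp
          | tmul a b =>
            simp only [TensorProduct.map_tmul, Submodule.coe_subtype,
              LinearMap.id_coe, id_eq, TensorProduct.rid_tmul, TensorProduct.lid_tmul]
            rcases Nat.eq_zero_or_pos i with hi | hi
            · -- a is a scalar
              have ha0 : (a : A) ∈ (1 : Submodule k A) := hconn ▸ (hi ▸ a.2)
              obtain ⟨c, hc⟩ := Submodule.mem_one.mp ha0
              rw [← hc, Bialgebra.counit_algebraMap, Algebra.algebraMap_eq_smul_one]
              simp only [map_smul, hd1, smul_zero, zero_tmul, zero_add, add_zero,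
                smul_tmul', tmul_smul]
            · rcases Nat.eq_zero_or_pos j with hj | hj
              · -- b is a scalar
                have hb0 : (b : A) ∈ (1 : Submodule k A) := hconn ▸ (hj ▸ b.2)
                obtain ⟨c, hc⟩ := Submodule.mem_one.mp hb0
                rw [← hc, Bialgebra.counit_algebraMap, Algebra.algebraMap_eq_smul_one]
                simp only [map_smul, hd1, smul_zero, tmul_zero, zero_tmul, zero_add,
                  add_zero, smul_tmul', tmul_smul]
              · -- both degrees positive, so both below n
                have hda : d (a : A) = 0 := hmin i (by omega) _ a.2
                have hdb : d (b : A) = 0 := hmin j (by omega) _ b.2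
                simp [map_smul, hda, hdb]
          | add s₁ s₂ ih1 ih2 =>
            simp only [map_add]
            rw [add_add_add_comm, ih1, ih2]
            simp only [add_tmul, tmul_add]
            abel
        · rw [iSup_neg hq] at ht
          rw [Submodule.mem_bot] at ht
          subst ht
          simp
      · simp
      · intro t₁ t₂ ih1 ih2
        simp only [map_add]
        rw [add_add_add_comm, ih1, ih2]
        simp only [add_tmul, tmul_add]
        abel
    have hkey := key _ (hcomul n x hx)
    have hR : (TensorProduct.rid k A)
        (TensorProduct.map LinearMap.id ε (Coalgebra.comul (R := k) x)) = x := by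
      have : TensorProduct.map LinearMap.id ε = ε.lTensor A := rfl
      rw [this, hε, Coalgebra.lTensor_counit_comul, TensorProduct.rid_tmul, one_smul]
    have hL : (TensorProduct.lid k A)
        (TensorProduct.map ε LinearMap.id (Coalgebra.comul (R := k) x)) = x := by
      have : TensorProduct.map ε LinearMap.id = ε.rTensor A := rfl
      rw [this, hε, Coalgebra.rTensor_counit_comul, TensorProduct.lid_tmul, one_smul]
    rw [hcoder x, hkey, hR, hL]
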